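/- arXiv:2411.15643 — 5 statements merged into one kernel-verified Lean document; each statement's English description precedes it below -/
import Mathlib

section
/- (Theorem 1, scalar form.) Let α > 0, T > 0, and set C_{α,T} = α/(e^{αT} − 1). Let ψ : ℝ → ℝ be differentiable on [0, T] and satisfy ψ'(t) + α·ψ(t) + C_{α,T}·ψ(0) ≤ 0 for all t ∈ [0, T]. Then ψ(T) ≤ 0; in particular there exists t₀ ∈ [0, T] such that ψ(t) ≤ 0 for all t ∈ [t₀, T]. -/
/-- Theorem 1, scalar form: For α > 0, T > 0, C_{α,T} = α/(e^{αT} − 1),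
if ψ is differentiable on [0,T] and ψ'(t) + α·ψ(t) + C_{α,T}·ψ(0) ≤ 0 on [0,T],
then ψ(T) ≤ 0; in particular there exists t₀ ∈ [0,T] with ψ(t) ≤ 0 on [t₀,T]. -/
theorem stmt3 (α T : ℝ) (hα : 0 < α) (hT : 0 < T)
    (ψ ψ' : ℝ → ℝ)
    (hψ : ∀ t ∈ Set.Icc (0 : ℝ) T, HasDerivWithinAt ψ (ψ' t) (Set.Icc (0 : ℝ) T) t)
    (hcond : ∀ t ∈ Set.Icc (0 : ℝ) T,
      ψ' t + α * ψ t + (α / (Real.exp (α * T) - 1)) * ψ 0 ≤ 0) :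
    ψ T ≤ 0 ∧ ∃ t₀ ∈ Set.Icc (0 : ℝ) T, ∀ t ∈ Set.Icc t₀ T, ψ t ≤ 0 := by
  set E := Real.exp (α * T) with hE
  have hE1 : 1 < E := by
    rw [hE, show (1 : ℝ) = Real.exp 0 by simp]
    exact Real.exp_lt_exp.mpr (by positivity)
  have hE1' : 0 < E - 1 := by linarith
  set c : ℝ := ψ 0 / (E - 1) with hc
  have hcmul : c * (E - 1) = ψ 0 := div_mul_cancel₀ _ (ne_of_gt hE1')
  set g : ℝ → ℝ := fun t => Real.exp (α * t) * (ψ t + c) with hgdef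
  have hg : ∀ t ∈ Set.Icc (0 : ℝ) T,
      HasDerivWithinAt g (Real.exp (α * t) * (ψ' t + α * (ψ t + c))) (Set.Icc (0 : ℝ) T) t := by
    intro t ht
    have h1 : HasDerivAt (fun t : ℝ => Real.exp (α * t)) (Real.exp (α * t) * α) t := by
      have : HasDerivAt (fun t : ℝ => α * t) α t := by
        simpa using (hasDerivAt_id t).const_mul α
      exact this.exp
    have h2 := (hψ t ht).add_const c
    have := (h1.hasDerivWithinAt (s := Set.Icc (0 : ℝ) T)).fun_mul h2
    exact this.congr_deriv (by ring)
  have hmono : AntitoneOn g (Set.Icc (0 : ℝ) T) := by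
    apply antitoneOn_of_deriv_nonpos (convex_Icc 0 T)
    · exact fun t ht => (hg t ht).continuousWithinAt
    · intro x hx
      rw [interior_Icc] at hx
      have hx' : x ∈ Set.Icc (0 : ℝ) T := Set.mem_Icc_of_Ioo hx
      exact ((hg x hx').hasDerivAt (Icc_mem_nhds hx.1 hx.2)).differentiableAt.differentiableWithinAt
    · intro x hx
      rw [interior_Icc] at hx
      have hx' : x ∈ Set.Icc (0 : ℝ) T := Set.mem_Icc_of_Ioo hx
      have hd : HasDerivAt g (Real.exp (α * x) * (ψ' x + α * (ψ x + c))) x :=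
        (hg x hx').hasDerivAt (Icc_mem_nhds hx.1 hx.2)
      rw [hd.deriv]
      have hco := hcond x hx'
      have hac : (α / (E - 1)) * ψ 0 = α * c := by
        rw [hc]; field_simp
      have : ψ' x + α * (ψ x + c) ≤ 0 := by
        rw [hac] at hco; linarith
      exact mul_nonpos_of_nonneg_of_nonpos (Real.exp_pos _).le this
  have hkey : g T ≤ g 0 :=
    hmono (Set.left_mem_Icc.mpr hT.le) (Set.right_mem_Icc.mpr hT.le) hT.le
  have hgT : g T = E * (ψ T + c) := by rw [hgdef]
  have hg0 : g 0 = ψ 0 + c := by simp [hgdef]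
  have hψT : ψ T ≤ 0 := by
    rw [hgT, hg0] at hkey
    nlinarith [hE1', hcmul]
  refine ⟨hψT, T, Set.right_mem_Icc.mpr hT.le, fun t ht => ?_⟩
  have : t = T := le_antisymm ht.2 ht.1
  rw [this]; exact hψT
end

section
/- (Theorem 1, strict version.) Let α > 0, T > 0, and set C_{α,T} = α/(e^{αT} − 1). Let ψ : ℝ → ℝ be differentiable on [0, T] and satisfy the strict inequality ψ'(t) + α·ψ(t) + C_{α,T}·ψ(0) < 0 for all t ∈ [0, T]. Then ψ(T) < 0. -/
/-- Theorem 1, strict version: For α > 0, T > 0, C_{α,T} = α/(e^{αT} − 1),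
if ψ is differentiable on [0,T] and ψ'(t) + α·ψ(t) + C_{α,T}·ψ(0) < 0 on [0,T],
then ψ(T) < 0. -/
theorem stmt4 (α T : ℝ) (hα : 0 < α) (hT : 0 < T)
    (ψ ψ' : ℝ → ℝ)
    (hψ : ∀ t ∈ Set.Icc (0 : ℝ) T, HasDerivWithinAt ψ (ψ' t) (Set.Icc (0 : ℝ) T) t)
    (hcond : ∀ t ∈ Set.Icc (0 : ℝ) T,
      ψ' t + α * ψ t + (α / (Real.exp (α * T) - 1)) * ψ 0 < 0) :
    ψ T < 0 := by
  have hE : (1 : ℝ) < Real.exp (α * T) := by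
    have h : 0 < α * T := mul_pos hα hT
    simpa using Real.one_lt_exp_iff.mpr h
  have hE' : 0 < Real.exp (α * T) - 1 := by linarith
  set c : ℝ := 1 / (Real.exp (α * T) - 1) with hc
  set u : ℝ → ℝ := fun t => Real.exp (α * t) * (ψ t + c * ψ 0) with hu
  have hcα : α / (Real.exp (α * T) - 1) = α * c := by
    rw [hc, mul_one_div]
  have hderiv : ∀ t ∈ Set.Icc (0 : ℝ) T,
      HasDerivWithinAt u (Real.exp (α * t) * (ψ' t + α * ψ t + α * c * ψ 0))
        (Set.Icc (0 : ℝ) T) t := by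
    intro t ht
    have h1 : HasDerivWithinAt (fun t => Real.exp (α * t)) (α * Real.exp (α * t))
        (Set.Icc (0 : ℝ) T) t := by
      have := (Real.hasDerivAt_exp (α * t)).comp t ((hasDerivAt_id t).const_mul α)
      simpa [mul_comm, Function.comp_def] using this.hasDerivWithinAt
    have h2 : HasDerivWithinAt (fun t => ψ t + c * ψ 0) (ψ' t) (Set.Icc (0 : ℝ) T) t :=
      (hψ t ht).add_const _
    have := h1.mul h2
    exact this.congr_deriv (by ring)
  have hcont : ContinuousOn u (Set.Icc (0 : ℝ) T) := fun t ht =>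
    (hderiv t ht).continuousWithinAt
  have hanti : StrictAntiOn u (Set.Icc (0 : ℝ) T) := by
    apply strictAntiOn_of_hasDerivWithinAt_neg (convex_Icc 0 T) hcont
    · intro t ht
      have ht' : t ∈ Set.Icc (0 : ℝ) T := interior_subset ht
      exact (hderiv t ht').mono interior_subset
    · intro t ht
      have ht' : t ∈ Set.Icc (0 : ℝ) T := interior_subset ht
      have h := hcond t ht'
      rw [hcα] at h
      have : 0 < Real.exp (α * t) := Real.exp_pos _
      nlinarith
  have key : u T < u 0 :=
    hanti (Set.left_mem_Icc.mpr hT.le) (Set.right_mem_Icc.mpr hT.le) hT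
  have hu0 : u 0 = ψ 0 + c * ψ 0 := by simp [hu]
  have huT : u T = Real.exp (α * T) * (ψ T + c * ψ 0) := rfl
  have h1c : (1 : ℝ) + c = c * Real.exp (α * T) := by
    rw [hc]
    field_simp
    ring
  rw [huT, hu0] at key
  have : Real.exp (α * T) * (ψ T + c * ψ 0) < c * Real.exp (α * T) * ψ 0 := by
    calc Real.exp (α * T) * (ψ T + c * ψ 0) < ψ 0 + c * ψ 0 := key
    _ = (1 + c) * ψ 0 := by ring
    _ = c * Real.exp (α * T) * ψ 0 := by rw [h1c]
  have hEpos : 0 < Real.exp (α * T) := Real.exp_pos _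
  nlinarith
end

section
/- (Theorem 1: boundary feasibility with a time-dependent boundary control barrier function.) Let α > 0, T > 0, and set C_{α,T} = α/(e^{αT} − 1). Let φ : ℝ × ℝ → ℝ be continuously differentiable, let Y : ℝ → ℝ be differentiable with Y(0) = U₀, and let S₀ ⊆ ℝ be a set such that for every t ∈ [0, T] the sublevel set {y ∈ ℝ : φ(t, y) ≤ 0} is contained in S₀. If for all t ∈ [0, T] it holds that ∂φ/∂y(t, Y(t))·Y'(t) + ∂φ/∂t(t, Y(t)) + α·φ(t, Y(t)) + C_{α,T}·φ(0, U₀) ≤ 0, then there exists t₀ ∈ [0, T] such that Y(t) ∈ S₀ for all t ∈ [t₀, T] (boundary feasibility of Y within S₀ over [0, T]). -/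
/-- Theorem 1: boundary feasibility with a time-dependent BCBF:
For α > 0, T > 0, C_{α,T} = α/(e^{αT} − 1), φ : ℝ × ℝ → ℝ continuously
differentiable, Y : ℝ → ℝ differentiable with Y(0) = U₀, and S₀ ⊆ ℝ containing
each sublevel set {y | φ(t,y) ≤ 0}, t ∈ [0,T]: if for all t ∈ [0,T],
∂φ/∂y(t,Y(t))·Y'(t) + ∂φ/∂t(t,Y(t)) + α·φ(t,Y(t)) + C_{α,T}·φ(0,U₀) ≤ 0,
then there is t₀ ∈ [0,T] with Y(t) ∈ S₀ for all t ∈ [t₀,T]. -/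
theorem stmt5 (α T U₀ : ℝ) (hα : 0 < α) (hT : 0 < T)
    (φ : ℝ → ℝ → ℝ) (hφ : ContDiff ℝ 1 (Function.uncurry φ))
    (Y : ℝ → ℝ) (hY : Differentiable ℝ Y) (hY0 : Y 0 = U₀)
    (S₀ : Set ℝ)
    (hS : ∀ t ∈ Set.Icc (0 : ℝ) T, {y : ℝ | φ t y ≤ 0} ⊆ S₀)
    (hcond : ∀ t ∈ Set.Icc (0 : ℝ) T,
      deriv (fun y => φ t y) (Y t) * deriv Y t
          + deriv (fun s => φ s (Y t)) t
          + α * φ t (Y t)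
          + (α / (Real.exp (α * T) - 1)) * φ 0 U₀ ≤ 0) :
    ∃ t₀ ∈ Set.Icc (0 : ℝ) T, ∀ t ∈ Set.Icc t₀ T, Y t ∈ S₀ := by
  set C : ℝ := α / (Real.exp (α * T) - 1) with hCdef
  set ψ : ℝ → ℝ := fun t => φ t (Y t) with hψdef
  have hF : Differentiable ℝ (Function.uncurry φ) := hφ.differentiable one_ne_zero
  have hψderiv : ∀ t, HasDerivAt ψ
      (deriv (fun y => φ t y) (Y t) * deriv Y t + deriv (fun s => φ s (Y t)) t) t := by
    intro t
    have hp : HasFDerivAt (Function.uncurry φ)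
        (fderiv ℝ (Function.uncurry φ) (t, Y t)) (t, Y t) := (hF _).hasFDerivAt
    have hY' : HasDerivAt Y (deriv Y t) t := (hY t).hasDerivAt
    have hcurve : HasDerivAt (fun s => (s, Y s)) ((1 : ℝ), deriv Y t) t :=
      (hasDerivAt_id t).prodMk hY'
    have hmain : HasDerivAt ψ (fderiv ℝ (Function.uncurry φ) (t, Y t) (1, deriv Y t)) t :=
      HasFDerivAt.comp_hasDerivAt (l := Function.uncurry φ) t hp hcurve
    have h1 : deriv (fun s => φ s (Y t)) t
        = fderiv ℝ (Function.uncurry φ) (t, Y t) (1, 0) := by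
      have hc : HasDerivAt (fun s : ℝ => (s, Y t)) ((1 : ℝ), (0 : ℝ)) t :=
        (hasDerivAt_id t).prodMk (hasDerivAt_const t (Y t))
      exact (hp.comp_hasDerivAt t hc).deriv
    have h2 : deriv (fun y => φ t y) (Y t)
        = fderiv ℝ (Function.uncurry φ) (t, Y t) (0, 1) := by
      have hc : HasDerivAt (fun y : ℝ => (t, y)) ((0 : ℝ), (1 : ℝ)) (Y t) :=
        (hasDerivAt_const (Y t) t).prodMk (hasDerivAt_id (Y t))
      exact (hp.comp_hasDerivAt (Y t) hc).deriv
    have hsplit : fderiv ℝ (Function.uncurry φ) (t, Y t) (1, deriv Y t)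
        = fderiv ℝ (Function.uncurry φ) (t, Y t) (1, 0)
          + deriv Y t * fderiv ℝ (Function.uncurry φ) (t, Y t) (0, 1) := by
      have heq : ((1 : ℝ), deriv Y t) = ((1 : ℝ), (0 : ℝ)) + deriv Y t • ((0 : ℝ), (1 : ℝ)) := by
        simp [Prod.ext_iff]
      rw [heq, map_add, map_smul]
      simp [smul_eq_mul]
    have : deriv (fun y => φ t y) (Y t) * deriv Y t + deriv (fun s => φ s (Y t)) t
        = fderiv ℝ (Function.uncurry φ) (t, Y t) (1, deriv Y t) := by
      rw [h1, h2, hsplit]; ring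
    rw [this]; exact hmain
  set ψ0 : ℝ := φ 0 U₀ with hψ0def
  have hψzero : ψ 0 = ψ0 := by simp [hψdef, hY0, hψ0def]
  set g : ℝ → ℝ := fun t => Real.exp (α * t) * (ψ t + C * ψ0 / α) with hgdef
  have hg : ∀ t, HasDerivAt g
      (Real.exp (α * t) * ((deriv (fun y => φ t y) (Y t) * deriv Y t
        + deriv (fun s => φ s (Y t)) t) + α * ψ t + C * ψ0)) t := by
    intro t
    have hexp : HasDerivAt (fun t => Real.exp (α * t)) (Real.exp (α * t) * α) t := by
      simpa using ((hasDerivAt_id t).const_mul α).exp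
    have hinner : HasDerivAt (fun t => ψ t + C * ψ0 / α)
        (deriv (fun y => φ t y) (Y t) * deriv Y t + deriv (fun s => φ s (Y t)) t) t :=
      (hψderiv t).add_const _
    have : HasDerivAt g _ t := hexp.mul hinner
    convert this using 1
    have hα' : α ≠ 0 := ne_of_gt hα
    field_simp
    ring
  have hanti : AntitoneOn g (Set.Icc (0 : ℝ) T) := by
    apply antitoneOn_of_deriv_nonpos (convex_Icc 0 T)
    · exact fun t _ => ((hg t).continuousAt).continuousWithinAt
    · exact fun t _ => ((hg t).differentiableAt).differentiableWithinAt
    · intro t ht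
      rw [interior_Icc] at ht
      rw [(hg t).deriv]
      have hc := hcond t ⟨ht.1.le, ht.2.le⟩
      have hpos := Real.exp_pos (α * t)
      nlinarith [hc, hpos]
  have hgT : g T ≤ g 0 := hanti (Set.left_mem_Icc.2 hT.le) ⟨hT.le, le_rfl⟩ hT.le
  have hE1 : (1 : ℝ) < Real.exp (α * T) := by
    have h1 : 0 < α * T := mul_pos hα hT
    have := Real.add_one_le_exp (α * T)
    linarith
  have hψT : ψ T ≤ 0 := by
    have hE0 : (0 : ℝ) < Real.exp (α * T) := Real.exp_pos _
    have hEm1 : (0 : ℝ) < Real.exp (α * T) - 1 := by linarith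
    have hkey : C * ψ0 / α * (Real.exp (α * T) - 1) = ψ0 := by
      rw [hCdef]
      field_simp
    have hg0 : g 0 = ψ0 + C * ψ0 / α := by
      simp [hgdef, hψzero]
    have hgTval : g T = Real.exp (α * T) * (ψ T + C * ψ0 / α) := rfl
    rw [hg0, hgTval] at hgT
    nlinarith [hgT, hkey, hE0]
  refine ⟨T, ⟨hT.le, le_rfl⟩, ?_⟩
  intro t ht
  have htT : t = T := le_antisymm ht.2 ht.1
  subst htT
  exact hS t ⟨hT.le, le_rfl⟩ hψT
end

section
/- (Time-independent barrier special case of Theorem 1.) Let α > 0, T > 0, and set C_{α,T} = α/(e^{αT} − 1). Let φ : ℝ → ℝ be continuously differentiable, let Y : ℝ → ℝ be differentiable with Y(0) = U₀, and let S₀ ⊆ ℝ satisfy {y ∈ ℝ : φ(y) ≤ 0} ⊆ S₀. If for all t ∈ [0, T] it holds that φ'(Y(t))·Y'(t) + α·φ(Y(t)) + C_{α,T}·φ(U₀) ≤ 0, then there exists t₀ ∈ [0, T] such that Y(t) ∈ S₀ for all t ∈ [t₀, T]. -/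
/-- time-independent barrier special case of Theorem 1:
For α > 0, T > 0, C_{α,T} = α/(e^{αT} − 1), φ : ℝ → ℝ continuously
differentiable, Y : ℝ → ℝ differentiable with Y(0) = U₀, and S₀ ⊇ {y | φ(y) ≤ 0}:
if φ'(Y(t))·Y'(t) + α·φ(Y(t)) + C_{α,T}·φ(U₀) ≤ 0 for all t ∈ [0,T], then there
is t₀ ∈ [0,T] with Y(t) ∈ S₀ for all t ∈ [t₀,T]. -/
theorem stmt6 (α T U₀ : ℝ) (hα : 0 < α) (hT : 0 < T)
    (φ : ℝ → ℝ) (hφ : ContDiff ℝ 1 φ)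
    (Y : ℝ → ℝ) (hY : Differentiable ℝ Y) (hY0 : Y 0 = U₀)
    (S₀ : Set ℝ) (hS : {y : ℝ | φ y ≤ 0} ⊆ S₀)
    (hcond : ∀ t ∈ Set.Icc (0 : ℝ) T,
      deriv φ (Y t) * deriv Y t + α * φ (Y t)
          + (α / (Real.exp (α * T) - 1)) * φ U₀ ≤ 0) :
    ∃ t₀ ∈ Set.Icc (0 : ℝ) T, ∀ t ∈ Set.Icc t₀ T, Y t ∈ S₀ := by
  have hφd : Differentiable ℝ φ := hφ.differentiable one_ne_zero
  set E := Real.exp (α * T) with hE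
  have hE1 : 1 < E := by
    rw [hE, show (1:ℝ) = Real.exp 0 by simp]
    exact Real.exp_lt_exp.mpr (by positivity)
  set K := φ U₀ / (E - 1) with hK
  set g : ℝ → ℝ := fun t => Real.exp (α * t) * (φ (Y t) + K) with hg
  have hgd : ∀ t : ℝ, HasDerivAt g
      (Real.exp (α * t) * α * (φ (Y t) + K)
        + Real.exp (α * t) * (deriv φ (Y t) * deriv Y t)) t := by
    intro t
    have h1 : HasDerivAt (fun t : ℝ => α * t) α t := by
      simpa using (hasDerivAt_id t).const_mul α
    have h2 := h1.exp
    have h5 : HasDerivAt (fun t => φ (Y t)) (deriv φ (Y t) * deriv Y t) t :=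
      (hφd (Y t)).hasDerivAt.comp t (hY t).hasDerivAt
    have h6 := (h5.add_const K)
    exact h2.mul h6
  have hanti : AntitoneOn g (Set.Icc 0 T) := by
    apply antitoneOn_of_deriv_nonpos (convex_Icc 0 T)
    · exact (Differentiable.continuous (fun t => (hgd t).differentiableAt)).continuousOn
    · exact fun x _ => ((hgd x).differentiableAt).differentiableWithinAt
    · intro x hx
      rw [interior_Icc] at hx
      rw [(hgd x).deriv]
      have hc := hcond x ⟨hx.1.le, hx.2.le⟩
      have hKE : K * (E - 1) = φ U₀ := div_mul_cancel₀ _ (by linarith)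
      have hαK : (α / (E - 1)) * φ U₀ = α * K := by
        rw [hK]; field_simp
      have heq : Real.exp (α * x) * α * (φ (Y x) + K)
          + Real.exp (α * x) * (deriv φ (Y x) * deriv Y x)
          = Real.exp (α * x) * (deriv φ (Y x) * deriv Y x + α * φ (Y x)
              + (α / (E - 1)) * φ U₀) := by
        rw [hαK]; ring
      rw [heq]
      exact mul_nonpos_of_nonneg_of_nonpos (Real.exp_pos _).le hc
  have hle : g T ≤ g 0 :=
    hanti (Set.left_mem_Icc.mpr hT.le) (Set.right_mem_Icc.mpr hT.le) hT.le
  have hgT : g T = E * (φ (Y T) + K) := by simp [hg, hE]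
  have hg0 : g 0 = φ U₀ + K := by simp [hg, hY0]
  have hφT : φ (Y T) ≤ 0 := by
    rw [hgT, hg0] at hle
    have hKE : K * (E - 1) = φ U₀ := div_mul_cancel₀ _ (by linarith)
    nlinarith
  exact ⟨T, Set.right_mem_Icc.mpr hT.le, fun t ht => by
    have : t = T := le_antisymm ht.2 ht.1
    exact hS (by simpa [this] using hφT)⟩
end

section
/- (Theorem 2: boundary feasibility via the neural-operator derivative condition.) Let α > 0, T > 0, and set C_{α,T} = α/(e^{αT} − 1). Let U : ℝ → ℝ and Y : ℝ → ℝ be differentiable with Y(0) = U(0), and suppose there exist functions Λ, μ : ℝ → ℝ such that Y'(t) = Λ(t)·U'(t) + μ(t) for all t ∈ [0, T] (the affine dependence of the modeled output derivative on the input derivative). Let φ : ℝ × ℝ → ℝ be continuously differentiable and let S₀ ⊆ ℝ satisfy {y ∈ ℝ : φ(t, y) ≤ 0} ⊆ S₀ for all t ∈ [0, T]. If for all t ∈ [0, T] it holds that ∂φ/∂y(t, Y(t))·(Λ(t)·U'(t) + μ(t)) + ∂φ/∂t(t, Y(t)) + α·φ(t, Y(t)) + C_{α,T}·φ(0, U(0))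 ≤ 0, then there exists t₀ ∈ [0, T] such that Y(t) ∈ S₀ for all t ∈ [t₀, T]. -/
/-- Theorem 2: boundary feasibility via the neural-operator
derivative condition: For α > 0, T > 0, C_{α,T} = α/(e^{αT} − 1), U, Y : ℝ → ℝ
differentiable with Y(0) = U(0) and Y'(t) = Λ(t)·U'(t) + μ(t) on [0,T],
φ : ℝ × ℝ → ℝ continuously differentiable, and S₀ containing each sublevel set
{y | φ(t,y) ≤ 0} for t ∈ [0,T]: if for all t ∈ [0,T],
∂φ/∂y(t,Y(t))·(Λ(t)·U'(t) + μ(t)) + ∂φ/∂t(t,Y(t)) + α·φ(t,Y(t)) + C_{α,T}·φ(0,U(0)) ≤ 0,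
then there is t₀ ∈ [0,T] with Y(t) ∈ S₀ for all t ∈ [t₀,T]. -/
theorem stmt14 (α T : ℝ) (hα : 0 < α) (hT : 0 < T)
    (U Y : ℝ → ℝ) (hU : Differentiable ℝ U) (hY : Differentiable ℝ Y)
    (h0 : Y 0 = U 0)
    (Λ μ : ℝ → ℝ)
    (haff : ∀ t ∈ Set.Icc (0 : ℝ) T, deriv Y t = Λ t * deriv U t + μ t)
    (φ : ℝ → ℝ → ℝ) (hφ : ContDiff ℝ 1 (Function.uncurry φ))
    (S₀ : Set ℝ)
    (hS : ∀ t ∈ Set.Icc (0 : ℝ) T, {y : ℝ | φ t y ≤ 0} ⊆ S₀)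
    (hcond : ∀ t ∈ Set.Icc (0 : ℝ) T,
      deriv (fun y => φ t y) (Y t) * (Λ t * deriv U t + μ t)
          + deriv (fun s => φ s (Y t)) t
          + α * φ t (Y t)
          + (α / (Real.exp (α * T) - 1)) * φ 0 (U 0) ≤ 0) :
    ∃ t₀ ∈ Set.Icc (0 : ℝ) T, ∀ t ∈ Set.Icc t₀ T, Y t ∈ S₀ := by
  have hF : Differentiable ℝ (Function.uncurry φ) := hφ.differentiable one_ne_zero
  set F := Function.uncurry φ with hFdef
  set E := Real.exp (α * T) with hEdef
  have hE : 1 < E := by have := Real.add_one_le_exp (α * T); nlinarith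
  have hE1 : E - 1 ≠ 0 := by linarith
  set g0 : ℝ := φ 0 (U 0) with hg0
  set c0 : ℝ := g0 / (E - 1) with hc0
  -- derivative of g t = φ t (Y t)
  have hg : ∀ t : ℝ, HasDerivAt (fun s => φ s (Y s))
      (deriv (fun s => φ s (Y t)) t + deriv (fun y => φ t y) (Y t) * deriv Y t) t := by
    intro t
    have hcurve : HasDerivAt (fun s => ((s, Y s) : ℝ × ℝ)) (1, deriv Y t) t :=
      (hasDerivAt_id t).prodMk (hY t).hasDerivAt
    have hcomp : HasDerivAt (fun s => F (s, Y s)) (fderiv ℝ F (t, Y t) (1, deriv Y t)) t :=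
      by exact (hF (t, Y t)).hasFDerivAt.comp_hasDerivAt t hcurve
    have hpt : HasDerivAt (fun s => φ s (Y t)) (fderiv ℝ F (t, Y t) (1, 0)) t := by
      have hc2 : HasDerivAt (fun s => ((s, Y t) : ℝ × ℝ)) ((1 : ℝ), (0 : ℝ)) t :=
        (hasDerivAt_id t).prodMk (hasDerivAt_const t (Y t))
      exact (hF (t, Y t)).hasFDerivAt.comp_hasDerivAt t hc2
    have hpy : HasDerivAt (fun y => φ t y) (fderiv ℝ F (t, Y t) (0, 1)) (Y t) := by
      have hc2 : HasDerivAt (fun y => ((t, y) : ℝ × ℝ)) ((0 : ℝ), (1 : ℝ)) (Y t) :=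
        (hasDerivAt_const (Y t) t).prodMk (hasDerivAt_id (Y t))
      exact (hF (t, Y t)).hasFDerivAt.comp_hasDerivAt (Y t) hc2
    have hdec : ((1 : ℝ), deriv Y t) = ((1 : ℝ), (0 : ℝ)) + deriv Y t • ((0 : ℝ), (1 : ℝ)) := by
      simp [Prod.ext_iff]
    have hlin : fderiv ℝ F (t, Y t) (1, deriv Y t)
        = fderiv ℝ F (t, Y t) (1, 0) + deriv Y t * fderiv ℝ F (t, Y t) (0, 1) := by
      rw [hdec, map_add, map_smul]; simp [smul_eq_mul]
    rw [hpt.deriv, hpy.deriv]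
    rw [hlin] at hcomp
    simpa [hFdef, Function.uncurry, mul_comm] using hcomp
  -- the exponentially weighted function
  set h : ℝ → ℝ := fun t => Real.exp (α * t) * (φ t (Y t) + c0) with hhdef
  have hh : ∀ t : ℝ, HasDerivAt h
      (α * Real.exp (α * t) * (φ t (Y t) + c0)
        + Real.exp (α * t) * (deriv (fun s => φ s (Y t)) t
            + deriv (fun y => φ t y) (Y t) * deriv Y t)) t := by
    intro t
    have hexp : HasDerivAt (fun s => Real.exp (α * s)) (α * Real.exp (α * t)) t := by
      have := (Real.hasDerivAt_exp (α * t)).comp t ((hasDerivAt_id t).const_mul α)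
      simpa [mul_comm, Function.comp_def] using this
    have := hexp.mul ((hg t).add_const c0)
    simpa [hhdef, mul_comm, mul_assoc, mul_left_comm, Pi.mul_def] using this
  have hanti : AntitoneOn h (Set.Icc 0 T) := by
    apply antitoneOn_of_deriv_nonpos (convex_Icc 0 T)
    · exact Continuous.continuousOn (by
        have : Differentiable ℝ h := fun t => (hh t).differentiableAt
        exact this.continuous)
    · intro t ht
      exact ((hh t).differentiableAt).differentiableWithinAt
    · intro t ht
      rw [interior_Icc] at ht
      have ht' : t ∈ Set.Icc (0 : ℝ) T := ⟨le_of_lt ht.1, le_of_lt ht.2⟩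
      rw [(hh t).deriv]
      have hY' := haff t ht'
      have hc := hcond t ht'
      have hexppos : 0 < Real.exp (α * t) := Real.exp_pos _
      have hαc0 : α * c0 = α / (E - 1) * g0 := by
        rw [hc0]; field_simp
      rw [hY']
      nlinarith [mul_le_mul_of_nonneg_left hc (le_of_lt hexppos)]
  have hkey : φ T (Y T) ≤ 0 := by
    have hmem0 : (0 : ℝ) ∈ Set.Icc (0 : ℝ) T := ⟨le_rfl, le_of_lt hT⟩
    have hmemT : T ∈ Set.Icc (0 : ℝ) T := ⟨le_of_lt hT, le_rfl⟩
    have := hanti hmem0 hmemT (le_of_lt hT)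
    have hh0 : h 0 = g0 + c0 := by simp [hhdef, h0, hg0]
    have hhT : h T = E * (φ T (Y T) + c0) := by simp [hhdef, hEdef]
    rw [hh0, hhT] at this
    have hEc : g0 + c0 = E * c0 := by rw [hc0]; field_simp; ring
    nlinarith
  refine ⟨T, ⟨le_of_lt hT, le_rfl⟩, fun t ht => ?_⟩
  have : t = T := le_antisymm ht.2 ht.1
  subst this
  exact hS t ⟨le_of_lt hT, le_rfl⟩ hkey
end
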